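/- Let Q : ℝ₊ → ℝ₊ be increasing, absolutely continuous, with Q(0)=0, such that Q'' is a non-positive σ-finite measure on (0,∞) and ∫_{0+} Q(y)|Q''|(dy) < ∞. Let X be a centered continuous Gaussian process on [0,T] with stationary increments and Var(X_t) = Q(t). Then E[∫₀^T ds₁ ∫₀^{s₁} (X_{s₁} − X_{s₂})² |Q''|(ds₁ − s₂)] = 2 ∫₀^T ds₁ ∫₀^{s₁} Q(s₂)|Q''|(ds₂) < ∞, and in particular ∫_{[0,T]²} (X_{s₁}−X_{s₂})² |Q''|(ds₂−s₁) ds₁ < ∞ almost surely. -/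

import Mathlib

open MeasureTheory ProbabilityTheory

theorem stmt_13 {Ω : Type*} [MeasurableSpace Ω] (P : Measure Ω) [IsProbabilityMeasure P]
    (T : ℝ) (hT : 0 < T) (Q q : ℝ → ℝ) (μ : Measure ℝ) [SigmaFinite μ]
    (hQc : Continuous Q) (hQ0 : Q 0 = 0) (hQmono : MonotoneOn Q (Set.Ici 0))
    -- `Q` is absolutely continuous with derivative `q` on `(0,∞)`
    (hq : ∀ t : ℝ, 0 < t → HasDerivAt Q (q t) t)
    -- `μ = |Q''|` is carried by `(0,∞)` and `Q'' = -μ` is non-positive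
    (hμsupp : μ (Set.Iic 0) = 0)
    (hQ'' : ∀ a b : ℝ, 0 < a → a ≤ b → q b - q a = -(μ (Set.Ioc a b)).toReal)
    (hμloc : ∀ a : ℝ, 0 < a → μ (Set.Ioi a) < ⊤)
    -- `∫_{0+} Q(y) |Q''|(dy) < ∞`
    (hint : ∫⁻ y in Set.Ioc (0:ℝ) T, ENNReal.ofReal (Q y) ∂μ < ⊤)
    (X : ℝ → Ω → ℝ)
    (hXmeas : Measurable fun p : ℝ × Ω => X p.1 p.2)
    (hXcont : ∀ ω, Continuous fun t => X t ω)
    (hX0 : ∀ᵐ ω ∂P, X 0 ω = 0)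
    (hGauss : ∀ s t : ℝ, ∃ v : NNReal,
      Measure.map (fun ω => X s ω - X t ω) P = gaussianReal 0 v)
    -- stationary increments with variance `Q`
    (hstat : ∀ s t : ℝ, ∫⁻ ω, ENNReal.ofReal ((X s ω - X t ω) ^ 2) ∂P
      = ENNReal.ofReal (Q |s - t|)) :
    (∫⁻ ω, (2 * ∫⁻ s₁ in Set.Ioc (0:ℝ) T,
          ∫⁻ u in Set.Ioc (0:ℝ) s₁, ENNReal.ofReal ((X s₁ ω - X (s₁ - u) ω) ^ 2) ∂μ) ∂P
        = 2 * ∫⁻ s₁ in Set.Ioc (0:ℝ) T,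
            ∫⁻ u in Set.Ioc (0:ℝ) s₁, ENNReal.ofReal (Q u) ∂μ) ∧
    (2 * ∫⁻ s₁ in Set.Ioc (0:ℝ) T,
        ∫⁻ u in Set.Ioc (0:ℝ) s₁, ENNReal.ofReal (Q u) ∂μ < ⊤) ∧
    (∀ᵐ ω ∂P, ∫⁻ s₁ in Set.Ioc (0:ℝ) T,
        ∫⁻ u in Set.Ioc (0:ℝ) s₁, ENNReal.ofReal ((X s₁ ω - X (s₁ - u) ω) ^ 2) ∂μ < ⊤) := by
  set f : ℝ → ℝ → Ω → ENNReal := fun s u ω => ENNReal.ofReal ((X s ω - X (s - u) ω) ^ 2) with hf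
  have hfm : Measurable (fun p : (ℝ × ℝ) × Ω => f p.1.1 p.1.2 p.2) := by
    apply Measurable.ennreal_ofReal
    apply Measurable.pow_const
    exact (hXmeas.comp (measurable_fst.fst.prodMk measurable_snd)).sub
      (hXmeas.comp ((measurable_fst.fst.sub measurable_fst.snd).prodMk measurable_snd))
  -- measurability of the inner (u) integral as function of (ω, s₁)
  have hgm : Measurable (fun p : Ω × ℝ => ∫⁻ u in Set.Ioc (0:ℝ) p.2, f p.2 u p.1 ∂μ) := by
    have heq : ∀ p : Ω × ℝ, ∫⁻ u in Set.Ioc (0:ℝ) p.2, f p.2 u p.1 ∂μ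
        = ∫⁻ u, ({q : (Ω × ℝ) × ℝ | 0 < q.2 ∧ q.2 ≤ q.1.2}.indicator
            (fun q => f q.1.2 q.2 q.1.1)) (p, u) ∂μ := by
      intro p
      rw [← lintegral_indicator measurableSet_Ioc]
      refine lintegral_congr fun u => ?_
      simp [Set.indicator_apply, Set.mem_Ioc]
    simp_rw [heq]
    apply Measurable.lintegral_prod_right'
    apply Measurable.indicator
    · exact hfm.comp ((measurable_fst.snd.prodMk measurable_snd).prodMk measurable_fst.fst)
    · exact (measurableSet_lt measurable_const measurable_snd).inter
        (measurableSet_le measurable_snd measurable_fst.snd)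
  -- swap ω and u for fixed s₁, then apply hstat
  have step2 : ∀ s₁ : ℝ, ∫⁻ ω, ∫⁻ u in Set.Ioc (0:ℝ) s₁, f s₁ u ω ∂μ ∂P
      = ∫⁻ u in Set.Ioc (0:ℝ) s₁, ENNReal.ofReal (Q u) ∂μ := by
    intro s₁
    rw [lintegral_lintegral_swap]
    · refine setLIntegral_congr_fun measurableSet_Ioc (fun u hu => ?_)
      have := hstat s₁ (s₁ - u)
      simp only [hf]
      rw [this]
      rw [show s₁ - (s₁ - u) = u by ring, abs_of_pos hu.1]
    · exact ((hfm.comp (((measurable_const.prodMk measurable_snd).prodMk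
        measurable_fst) : Measurable fun p : Ω × ℝ => ((s₁, p.2), p.1)))).aemeasurable
  have main : ∫⁻ ω, (∫⁻ s₁ in Set.Ioc (0:ℝ) T,
        ∫⁻ u in Set.Ioc (0:ℝ) s₁, f s₁ u ω ∂μ) ∂P
      = ∫⁻ s₁ in Set.Ioc (0:ℝ) T, ∫⁻ u in Set.Ioc (0:ℝ) s₁, ENNReal.ofReal (Q u) ∂μ := by
    rw [lintegral_lintegral_swap hgm.aemeasurable]
    exact lintegral_congr step2
  have fin : ∫⁻ s₁ in Set.Ioc (0:ℝ) T, ∫⁻ u in Set.Ioc (0:ℝ) s₁, ENNReal.ofReal (Q u) ∂μ < ⊤ := by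
    have hb : ∀ s₁ ∈ Set.Ioc (0:ℝ) T, ∫⁻ u in Set.Ioc (0:ℝ) s₁, ENNReal.ofReal (Q u) ∂μ
        ≤ ∫⁻ u in Set.Ioc (0:ℝ) T, ENNReal.ofReal (Q u) ∂μ :=
      fun s₁ hs₁ => lintegral_mono_set (Set.Ioc_subset_Ioc_right hs₁.2)
    calc ∫⁻ s₁ in Set.Ioc (0:ℝ) T, ∫⁻ u in Set.Ioc (0:ℝ) s₁, ENNReal.ofReal (Q u) ∂μ
        ≤ ∫⁻ _ in Set.Ioc (0:ℝ) T, (∫⁻ u in Set.Ioc (0:ℝ) T, ENNReal.ofReal (Q u) ∂μ) :=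
          lintegral_mono_ae ((ae_restrict_iff' measurableSet_Ioc).2 (ae_of_all _ hb))
      _ = (∫⁻ u in Set.Ioc (0:ℝ) T, ENNReal.ofReal (Q u) ∂μ) * volume (Set.Ioc (0:ℝ) T) :=
          setLIntegral_const _ _
      _ < ⊤ := ENNReal.mul_lt_top hint measure_Ioc_lt_top
  have hm : Measurable fun ω => ∫⁻ s₁ in Set.Ioc (0:ℝ) T,
      ∫⁻ u in Set.Ioc (0:ℝ) s₁, f s₁ u ω ∂μ := Measurable.lintegral_prod_right' hgm
  refine ⟨?_, ?_, ?_⟩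
  · rw [lintegral_const_mul' 2 _ (by norm_num), main]
  · exact ENNReal.mul_lt_top (by norm_num) fin
  · exact ae_lt_top hm (by rw [main]; exact fin.ne)
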